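/- Let G be a finite graph on k vertices, i a vertex of degree n_i ≥ 2, and j, l two distinct fixed neighbors of i. Then for each r ∈ {2, …, n_i}, the number of permutations π of the vertices such that exactly r neighbors of i precede i and both j and l are among them equals r(r-1)·k!/((n_i - 1)·n_i·(n_i + 1)). -/

import Mathlib

open Finset
open scoped Classical

section Aux

variable {α β : Type*} [Fintype α] [DecidableEq α] [Fintype β] [DecidableEq β]

private lemma fiber_mul_card (W : Finset (α ≃ β)) (a : α) (B : Finset β)
    (hmem : ∀ e ∈ W, e a ∈ B)
    (hcl : ∀ e ∈ W, ∀ b ∈ B, ∀ b' ∈ B, e.trans (Equiv.swap b b') ∈ W)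
    {b : β} (hb : b ∈ B) :
    (W.filter (fun e => e a = b)).card * B.card = W.card := by
  have key : ∀ b' ∈ B, (W.filter (fun e => e a = b')).card
      = (W.filter (fun e => e a = b)).card := by
    intro b' hb'
    refine Finset.card_nbij' (fun e => e.trans (Equiv.swap b' b))
      (fun e => e.trans (Equiv.swap b' b)) ?_ ?_ ?_ ?_
    · intro e he
      rw [Finset.mem_coe, Finset.mem_filter] at he ⊢
      exact ⟨hcl e he.1 b' hb' b hb, by simp [he.2]⟩
    · intro e he
      rw [Finset.mem_coe, Finset.mem_filter] at he ⊢
      exact ⟨hcl e he.1 b' hb' b hb, by simp [he.2]⟩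
    · intro e _; ext x; simp [Equiv.swap_apply_self]
    · intro e _; ext x; simp [Equiv.swap_apply_self]
  rw [Finset.card_eq_sum_card_fiberwise (f := fun e => e a) (s := W) (t := B) (fun e he => hmem e he),
    Finset.sum_congr rfl key, Finset.sum_const, smul_eq_mul, mul_comm]

private lemma triple_fiber (a1 a2 a3 : α) (h12 : a1 ≠ a2) (h13 : a1 ≠ a3) (h23 : a2 ≠ a3)
    (b1 b2 b3 : β) (g12 : b1 ≠ b2) (g13 : b1 ≠ b3) (g23 : b2 ≠ b3) :
    ((Finset.univ : Finset (α ≃ β)).filter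
        (fun e => e a1 = b1 ∧ e a2 = b2 ∧ e a3 = b3)).card
      * ((Fintype.card β - 2) * ((Fintype.card β - 1) * Fintype.card β))
      = Fintype.card (α ≃ β) := by
  have s1 : ((Finset.univ : Finset (α ≃ β)).filter (fun e => e a1 = b1)).card
      * Fintype.card β = Fintype.card (α ≃ β) := by
    have h := fiber_mul_card (Finset.univ : Finset (α ≃ β)) a1 Finset.univ
      (fun e _ => Finset.mem_univ _) (fun e _ b _ b' _ => Finset.mem_univ _)
      (Finset.mem_univ b1)
    simpa using h
  have s2 : ((Finset.univ : Finset (α ≃ β)).filter (fun e => e a1 = b1 ∧ e a2 = b2)).card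
      * (Fintype.card β - 1)
      = ((Finset.univ : Finset (α ≃ β)).filter (fun e => e a1 = b1)).card := by
    have h := fiber_mul_card ((Finset.univ : Finset (α ≃ β)).filter (fun e => e a1 = b1))
      a2 (Finset.univ.erase b1) ?_ ?_ (b := b2) (Finset.mem_erase.2 ⟨g12.symm, Finset.mem_univ _⟩)
    · rw [Finset.filter_filter] at h
      rw [← h, Finset.card_erase_of_mem (Finset.mem_univ _), Finset.card_univ]
    · intro e he
      rw [Finset.mem_filter] at he
      refine Finset.mem_erase.2 ⟨?_, Finset.mem_univ _⟩
      rw [← he.2]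
      exact fun h => h12 (e.injective h.symm)
    · intro e he b hbB b' hbB'
      rw [Finset.mem_filter] at he ⊢
      refine ⟨Finset.mem_univ _, ?_⟩
      simp only [Equiv.trans_apply, he.2]
      exact Equiv.swap_apply_of_ne_of_ne (Ne.symm (Finset.mem_erase.1 hbB).1)
        (Ne.symm (Finset.mem_erase.1 hbB').1)
  have s3 : ((Finset.univ : Finset (α ≃ β)).filter
        (fun e => e a1 = b1 ∧ e a2 = b2 ∧ e a3 = b3)).card * (Fintype.card β - 2)
      = ((Finset.univ : Finset (α ≃ β)).filter (fun e => e a1 = b1 ∧ e a2 = b2)).card := by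
    have h := fiber_mul_card
      ((Finset.univ : Finset (α ≃ β)).filter (fun e => e a1 = b1 ∧ e a2 = b2))
      a3 ((Finset.univ.erase b1).erase b2) ?_ ?_ (b := b3)
      (Finset.mem_erase.2 ⟨g23.symm, Finset.mem_erase.2 ⟨g13.symm, Finset.mem_univ _⟩⟩)
    · rw [Finset.filter_filter] at h
      have hc : ((Finset.univ.erase b1).erase b2).card = Fintype.card β - 2 := by
        rw [Finset.card_erase_of_mem (Finset.mem_erase.2 ⟨g12.symm, Finset.mem_univ _⟩),
          Finset.card_erase_of_mem (Finset.mem_univ _), Finset.card_univ]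
        omega
      simp only [and_assoc] at h
      rw [hc] at h
      exact h
    · intro e he
      rw [Finset.mem_filter] at he
      refine Finset.mem_erase.2 ⟨?_, Finset.mem_erase.2 ⟨?_, Finset.mem_univ _⟩⟩
      · rw [← he.2.2]; exact fun h => h23 (e.injective h.symm)
      · rw [← he.2.1]; exact fun h => h13 (e.injective h.symm)
    · intro e he b hbB b' hbB'
      rw [Finset.mem_filter] at he ⊢
      obtain ⟨hb2, hb1, -⟩ := Finset.mem_erase.1 hbB |>.imp id (fun h => Finset.mem_erase.1 h)
      obtain ⟨hb2', hb1', -⟩ := Finset.mem_erase.1 hbB' |>.imp id (fun h => Finset.mem_erase.1 h)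
      refine ⟨Finset.mem_univ _, ?_, ?_⟩
      · simp only [Equiv.trans_apply, he.2.1]
        exact Equiv.swap_apply_of_ne_of_ne (Ne.symm hb1) (Ne.symm hb1')
      · simp only [Equiv.trans_apply, he.2.2]
        exact Equiv.swap_apply_of_ne_of_ne (Ne.symm hb2) (Ne.symm hb2')
  calc ((Finset.univ : Finset (α ≃ β)).filter
        (fun e => e a1 = b1 ∧ e a2 = b2 ∧ e a3 = b3)).card
      * ((Fintype.card β - 2) * ((Fintype.card β - 1) * Fintype.card β))
      = ((((Finset.univ : Finset (α ≃ β)).filter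
          (fun e => e a1 = b1 ∧ e a2 = b2 ∧ e a3 = b3)).card * (Fintype.card β - 2))
          * (Fintype.card β - 1)) * Fintype.card β := by ring
    _ = Fintype.card (α ≃ β) := by rw [s3, s2, s1]

end Aux

section Rank

variable {k : ℕ}

private def rnk (S : Finset (Fin k)) (σ : Equiv.Perm (Fin k)) (u : Fin k) : ℕ :=
  (S.filter (fun v => σ v < σ u)).card

private lemma rnk_lt {S : Finset (Fin k)} (σ : Equiv.Perm (Fin k)) {u : Fin k} (hu : u ∈ S) :
    rnk S σ u < S.card := by
  have hsub : S.filter (fun v => σ v < σ u) ⊆ S.erase u := by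
    intro v hv
    rw [Finset.mem_filter] at hv
    exact Finset.mem_erase.2 ⟨fun h => absurd hv.2 (by rw [h]; exact lt_irrefl _), hv.1⟩
  calc rnk S σ u ≤ (S.erase u).card := Finset.card_le_card hsub
    _ = S.card - 1 := Finset.card_erase_of_mem hu
    _ < S.card := Nat.sub_lt (Finset.card_pos.2 ⟨u, hu⟩) one_pos

private lemma rnk_lt_rnk {S : Finset (Fin k)} (σ : Equiv.Perm (Fin k)) {u v : Fin k}
    (hu : u ∈ S) (h : σ u < σ v) : rnk S σ u < rnk S σ v := by
  apply Finset.card_lt_card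
  rw [Finset.ssubset_iff_of_subset]
  · exact ⟨u, Finset.mem_filter.2 ⟨hu, h⟩, by simp⟩
  · intro w hw
    rw [Finset.mem_filter] at hw ⊢
    exact ⟨hw.1, hw.2.trans h⟩

private lemma rnk_lt_rnk_iff {S : Finset (Fin k)} (σ : Equiv.Perm (Fin k)) {u v : Fin k}
    (hu : u ∈ S) (hv : v ∈ S) : rnk S σ u < rnk S σ v ↔ σ u < σ v := by
  constructor
  · intro h
    rcases lt_trichotomy (σ u) (σ v) with h' | h' | h'
    · exact h'
    · rw [σ.injective h'] at h; exact absurd h (lt_irrefl _)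
    · exact absurd (rnk_lt_rnk σ hv h') (by omega)
  · exact rnk_lt_rnk σ hu

private noncomputable def Rk (S : Finset (Fin k)) (σ : Equiv.Perm (Fin k)) :
    {x // x ∈ S} ≃ Fin S.card :=
  Equiv.ofBijective (fun u => ⟨rnk S σ u.1, rnk_lt σ u.2⟩) (by
    rw [Fintype.bijective_iff_injective_and_card]
    constructor
    · intro u v huv
      have h : rnk S σ u.1 = rnk S σ v.1 := congrArg Fin.val huv
      have : σ u.1 = σ v.1 := by
        by_contra hne
        rcases lt_or_gt_of_ne hne with h' | h'
        · exact absurd (rnk_lt_rnk σ u.2 h') (by omega)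
        · exact absurd (rnk_lt_rnk σ v.2 h') (by omega)
      exact Subtype.ext (σ.injective this)
    · simp [Fintype.card_coe])

private lemma Rk_apply (S : Finset (Fin k)) (σ : Equiv.Perm (Fin k)) (u : {x // x ∈ S}) :
    (Rk S σ u : Fin S.card) = ⟨rnk S σ u.1, rnk_lt σ u.2⟩ := rfl

private lemma rnk_mul_ofSubtype (S : Finset (Fin k)) (σ : Equiv.Perm (Fin k))
    (p : Equiv.Perm {x // x ∈ S}) {u : Fin k} (hu : u ∈ S) :
    rnk S (σ * Equiv.Perm.ofSubtype p) u = rnk S σ (p ⟨u, hu⟩).1 := by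
  unfold rnk
  refine Finset.card_bij' (fun v hv => (p ⟨v, (Finset.mem_filter.1 hv).1⟩).1)
    (fun w hw => (p.symm ⟨w, (Finset.mem_filter.1 hw).1⟩).1) ?_ ?_ ?_ ?_
  · intro v hv
    rw [Finset.mem_filter] at hv ⊢
    refine ⟨(p ⟨v, hv.1⟩).2, ?_⟩
    have h1 := hv.2
    rw [Equiv.Perm.mul_apply, Equiv.Perm.mul_apply,
      Equiv.Perm.ofSubtype_apply_of_mem p hv.1, Equiv.Perm.ofSubtype_apply_of_mem p hu] at h1
    exact h1
  · intro w hw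
    rw [Finset.mem_filter] at hw ⊢
    refine ⟨(p.symm ⟨w, hw.1⟩).2, ?_⟩
    rw [Equiv.Perm.mul_apply, Equiv.Perm.mul_apply,
      Equiv.Perm.ofSubtype_apply_of_mem p (p.symm ⟨w, hw.1⟩).2,
      Equiv.Perm.ofSubtype_apply_of_mem p hu]
    have : p (p.symm ⟨w, hw.1⟩) = ⟨w, hw.1⟩ := p.apply_symm_apply _
    rw [show (⟨(p.symm ⟨w, hw.1⟩).1, (p.symm ⟨w, hw.1⟩).2⟩ : {x // x ∈ S})
        = p.symm ⟨w, hw.1⟩ from rfl, this]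
    exact hw.2
  · intro v hv
    simp
  · intro w hw
    simp

end Rank

section Main

variable {k : ℕ}

private lemma Rk_mul (S : Finset (Fin k)) (σ : Equiv.Perm (Fin k))
    (p : Equiv.Perm {x // x ∈ S}) (x : {x // x ∈ S}) :
    Rk S (σ * Equiv.Perm.ofSubtype p) x = Rk S σ (p x) := by
  apply Fin.ext
  show rnk S (σ * Equiv.Perm.ofSubtype p) x.1 = rnk S σ (p x).1
  exact rnk_mul_ofSubtype S σ p x.2

private lemma Rk_of_pair (S : Finset (Fin k)) (σ' : Equiv.Perm (Fin k))
    (q : {x // x ∈ S} ≃ Fin S.card) (z : {x // x ∈ S}) :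
    Rk S (σ' * (Equiv.Perm.ofSubtype ((Rk S σ').trans q.symm))⁻¹) z = q z := by
  set p : Equiv.Perm {x // x ∈ S} := (Rk S σ').trans q.symm with hp
  set σ : Equiv.Perm (Fin k) := σ' * (Equiv.Perm.ofSubtype p)⁻¹ with hσ
  have hσ' : σ * Equiv.Perm.ofSubtype p = σ' := inv_mul_cancel_right _ _
  have h1 := Rk_mul S σ p (p.symm z)
  rw [hσ', Equiv.apply_symm_apply] at h1
  rw [← h1, hp]
  simp

private lemma lemmaA (S : Finset (Fin k)) (i j l : Fin k)
    (hiS : i ∈ S) (hjS : j ∈ S) (hlS : l ∈ S) (r : ℕ) (hrS : r < S.card) :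
    (Finset.univ.filter (fun σ : Equiv.Perm (Fin k) =>
        rnk S σ i = r ∧ σ j < σ i ∧ σ l < σ i)).card * Nat.factorial S.card
    = Nat.factorial k * (Finset.univ.filter (fun q : {x // x ∈ S} ≃ Fin S.card =>
        q ⟨i, hiS⟩ = ⟨r, hrS⟩ ∧ q ⟨j, hjS⟩ < ⟨r, hrS⟩ ∧ q ⟨l, hlS⟩ < ⟨r, hrS⟩)).card := by
  have hperm1 : (Finset.univ : Finset (Equiv.Perm {x // x ∈ S})).card
      = Nat.factorial S.card := by
    rw [Finset.card_univ, Fintype.card_perm, Fintype.card_coe]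
  have hperm2 : (Finset.univ : Finset (Equiv.Perm (Fin k))).card = Nat.factorial k := by
    rw [Finset.card_univ, Fintype.card_perm, Fintype.card_fin]
  rw [← hperm1, ← hperm2, ← Finset.card_product, ← Finset.card_product]
  refine Finset.card_bij'
    (fun x _ => (x.1 * Equiv.Perm.ofSubtype x.2, Rk S x.1))
    (fun y _ => (y.1 * (Equiv.Perm.ofSubtype ((Rk S y.1).trans y.2.symm))⁻¹,
      (Rk S y.1).trans y.2.symm)) ?_ ?_ ?_ ?_
  · -- forward membership
    rintro ⟨σ, p⟩ hx
    rw [Finset.mem_product] at hx ⊢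
    obtain ⟨hF, -⟩ := hx
    rw [Finset.mem_filter] at hF
    obtain ⟨-, h1, h2, h3⟩ := hF
    refine ⟨Finset.mem_univ _, Finset.mem_filter.2 ⟨Finset.mem_univ _, ?_, ?_, ?_⟩⟩
    · exact Fin.ext (by simpa [Rk_apply] using h1)
    · have := rnk_lt_rnk σ hjS h2
      rw [h1] at this
      simpa [Fin.lt_def, Rk_apply] using this
    · have := rnk_lt_rnk σ hlS h3
      rw [h1] at this
      simpa [Fin.lt_def, Rk_apply] using this
  · -- backward membership
    rintro ⟨σ', q⟩ hy
    rw [Finset.mem_product] at hy ⊢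
    obtain ⟨-, hV⟩ := hy
    rw [Finset.mem_filter] at hV
    obtain ⟨-, h1, h2, h3⟩ := hV
    refine ⟨Finset.mem_filter.2 ⟨Finset.mem_univ _, ?_, ?_, ?_⟩, Finset.mem_univ _⟩
    · have := Rk_of_pair S σ' q ⟨i, hiS⟩
      rw [h1] at this
      simpa [Rk_apply] using congrArg Fin.val this
    · rw [← rnk_lt_rnk_iff _ hjS hiS]
      have hi := Rk_of_pair S σ' q ⟨i, hiS⟩
      have hjq := Rk_of_pair S σ' q ⟨j, hjS⟩
      have : (Rk S (σ' * (Equiv.Perm.ofSubtype ((Rk S σ').trans q.symm))⁻¹) ⟨j, hjS⟩ : Fin S.card)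
          < Rk S (σ' * (Equiv.Perm.ofSubtype ((Rk S σ').trans q.symm))⁻¹) ⟨i, hiS⟩ := by
        rw [hi, hjq, h1]; exact h2
      simpa [Fin.lt_def, Rk_apply] using this
    · rw [← rnk_lt_rnk_iff _ hlS hiS]
      have hi := Rk_of_pair S σ' q ⟨i, hiS⟩
      have hlq := Rk_of_pair S σ' q ⟨l, hlS⟩
      have : (Rk S (σ' * (Equiv.Perm.ofSubtype ((Rk S σ').trans q.symm))⁻¹) ⟨l, hlS⟩ : Fin S.card)
          < Rk S (σ' * (Equiv.Perm.ofSubtype ((Rk S σ').trans q.symm))⁻¹) ⟨i, hiS⟩ := by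
        rw [hi, hlq, h1]; exact h3
      simpa [Fin.lt_def, Rk_apply] using this
  · -- left inverse
    rintro ⟨σ, p⟩ _
    have hp' : (Rk S (σ * Equiv.Perm.ofSubtype p)).trans (Rk S σ).symm = p := by
      ext x
      simp [Rk_mul S σ p]
    simp only [hp']
    rw [mul_inv_cancel_right]
  · -- right inverse
    rintro ⟨σ', q⟩ _
    have h2 : Rk S (σ' * (Equiv.Perm.ofSubtype ((Rk S σ').trans q.symm))⁻¹) = q :=
      Equiv.ext (Rk_of_pair S σ' q)
    simp only [h2]
    rw [inv_mul_cancel_right]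

end Main

section Final

variable {k : ℕ}

private lemma card_filter_lt_fin {m : ℕ} (r : ℕ) (hrm : r < m) :
    ((Finset.univ : Finset (Fin m)).filter (fun b => b < (⟨r, hrm⟩ : Fin m))).card = r := by
  rw [show ((Finset.univ : Finset (Fin m)).filter (fun b => b < (⟨r, hrm⟩ : Fin m))).card
      = (Finset.range r).card from ?_, Finset.card_range]
  apply Finset.card_nbij (fun b => b.val)
  · intro b hb
    rw [Finset.mem_coe, Finset.mem_filter] at hb
    exact Finset.mem_range.2 hb.2
  · intro b _ b' _ h
    exact Fin.ext h
  · intro t ht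
    rw [Finset.mem_coe, Finset.mem_range] at ht
    exact ⟨⟨t, ht.trans hrm⟩, Finset.mem_coe.2 (Finset.mem_filter.2 ⟨Finset.mem_univ _, ht⟩), rfl⟩

private lemma lemmaB (S : Finset (Fin k)) (i j l : Fin k)
    (hiS : i ∈ S) (hjS : j ∈ S) (hlS : l ∈ S)
    (hij : i ≠ j) (hil : i ≠ l) (hjl : j ≠ l) (r : ℕ) (hrS : r < S.card) :
    (Finset.univ.filter (fun q : {x // x ∈ S} ≃ Fin S.card =>
        q ⟨i, hiS⟩ = ⟨r, hrS⟩ ∧ q ⟨j, hjS⟩ < ⟨r, hrS⟩ ∧ q ⟨l, hlS⟩ < ⟨r, hrS⟩)).card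
      * ((S.card - 2) * ((S.card - 1) * S.card))
      = r * (r - 1) * Nat.factorial S.card := by
  set r' : Fin S.card := ⟨r, hrS⟩ with hr'
  set D : Finset (Fin S.card × Fin S.card) :=
    (Finset.univ ×ˢ Finset.univ).filter
      (fun ab => ab.1 < r' ∧ ab.2 < r' ∧ ab.1 ≠ ab.2) with hD
  have hsubne_ij : (⟨i, hiS⟩ : {x // x ∈ S}) ≠ ⟨j, hjS⟩ :=
    fun h => hij (congrArg Subtype.val h)
  have hsubne_il : (⟨i, hiS⟩ : {x // x ∈ S}) ≠ ⟨l, hlS⟩ :=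
    fun h => hil (congrArg Subtype.val h)
  have hsubne_jl : (⟨j, hjS⟩ : {x // x ∈ S}) ≠ ⟨l, hlS⟩ :=
    fun h => hjl (congrArg Subtype.val h)
  have hcardeq : Fintype.card ({x // x ∈ S} ≃ Fin S.card) = Nat.factorial S.card := by
    rw [Fintype.card_equiv (Rk S 1), Fintype.card_coe]
  have hfib := Finset.card_eq_sum_card_fiberwise
    (f := fun q : {x // x ∈ S} ≃ Fin S.card => (q ⟨j, hjS⟩, q ⟨l, hlS⟩))
    (s := Finset.univ.filter (fun q : {x // x ∈ S} ≃ Fin S.card =>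
        q ⟨i, hiS⟩ = r' ∧ q ⟨j, hjS⟩ < r' ∧ q ⟨l, hlS⟩ < r')) (t := D) ?_
  · rw [hfib, Finset.sum_mul]
    have hsummand : ∀ ab ∈ D,
        ((Finset.univ.filter (fun q : {x // x ∈ S} ≃ Fin S.card =>
          q ⟨i, hiS⟩ = r' ∧ q ⟨j, hjS⟩ < r' ∧ q ⟨l, hlS⟩ < r')).filter
            (fun q => (q ⟨j, hjS⟩, q ⟨l, hlS⟩) = ab)).card
          * ((S.card - 2) * ((S.card - 1) * S.card))
          = Nat.factorial S.card := by
      intro ab hab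
      rw [hD, Finset.mem_filter] at hab
      obtain ⟨-, hab1, hab2, hab3⟩ := hab
      have hset : (Finset.univ.filter (fun q : {x // x ∈ S} ≃ Fin S.card =>
          q ⟨i, hiS⟩ = r' ∧ q ⟨j, hjS⟩ < r' ∧ q ⟨l, hlS⟩ < r')).filter
            (fun q => (q ⟨j, hjS⟩, q ⟨l, hlS⟩) = ab)
          = Finset.univ.filter (fun q : {x // x ∈ S} ≃ Fin S.card =>
            q ⟨i, hiS⟩ = r' ∧ q ⟨j, hjS⟩ = ab.1 ∧ q ⟨l, hlS⟩ = ab.2) := by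
        ext q
        simp only [Finset.filter_filter, Finset.mem_filter, Finset.mem_univ, true_and,
          Prod.ext_iff]
        constructor
        · rintro ⟨⟨hq1, -, -⟩, hq2, hq3⟩
          exact ⟨hq1, hq2, hq3⟩
        · rintro ⟨hq1, hq2, hq3⟩
          exact ⟨⟨hq1, by rw [hq2]; exact hab1, by rw [hq3]; exact hab2⟩, hq2, hq3⟩
      rw [hset]
      have := triple_fiber (⟨i, hiS⟩ : {x // x ∈ S}) ⟨j, hjS⟩ ⟨l, hlS⟩
        hsubne_ij hsubne_il hsubne_jl r' ab.1 ab.2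
        (ne_of_gt hab1) (ne_of_gt hab2) hab3
      rw [Fintype.card_fin, hcardeq] at this
      exact this
    rw [Finset.sum_congr rfl hsummand, Finset.sum_const, smul_eq_mul]
    have hDcard : D.card = r * (r - 1) := by
      have hDeq : D = ((Finset.univ : Finset (Fin S.card)).filter (fun b => b < r')).offDiag := by
        ext ab
        simp only [hD, Finset.mem_filter, Finset.mem_offDiag, Finset.mem_product,
          Finset.mem_univ, true_and]
      rw [hDeq, Finset.offDiag_card, card_filter_lt_fin r hrS, Nat.mul_sub, mul_one]
    rw [hDcard]
  · intro q hq
    rw [Finset.mem_coe, Finset.mem_filter] at hq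
    obtain ⟨-, hq1, hq2, hq3⟩ := hq
    rw [Finset.mem_coe, hD, Finset.mem_filter]
    exact ⟨Finset.mem_product.2 ⟨Finset.mem_univ _, Finset.mem_univ _⟩, hq2, hq3,
      fun h => hsubne_jl (q.injective h)⟩

private lemma main_count (S : Finset (Fin k)) (i j l : Fin k)
    (hiS : i ∈ S) (hjS : j ∈ S) (hlS : l ∈ S)
    (hij : i ≠ j) (hil : i ≠ l) (hjl : j ≠ l) (r : ℕ) (hrS : r < S.card) :
    (Finset.univ.filter (fun σ : Equiv.Perm (Fin k) =>
        rnk S σ i = r ∧ σ j < σ i ∧ σ l < σ i)).card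
      * ((S.card - 2) * ((S.card - 1) * S.card))
      = r * (r - 1) * Nat.factorial k := by
  have hA := lemmaA S i j l hiS hjS hlS r hrS
  have hB := lemmaB S i j l hiS hjS hlS hij hil hjl r hrS
  apply Nat.eq_of_mul_eq_mul_right (Nat.factorial_pos S.card)
  calc (Finset.univ.filter (fun σ : Equiv.Perm (Fin k) =>
        rnk S σ i = r ∧ σ j < σ i ∧ σ l < σ i)).card
      * ((S.card - 2) * ((S.card - 1) * S.card)) * Nat.factorial S.card
      = (Finset.univ.filter (fun σ : Equiv.Perm (Fin k) =>
        rnk S σ i = r ∧ σ j < σ i ∧ σ l < σ i)).card * Nat.factorial S.card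
        * ((S.card - 2) * ((S.card - 1) * S.card)) := by ring
    _ = Nat.factorial k * ((Finset.univ.filter (fun q : {x // x ∈ S} ≃ Fin S.card =>
        q ⟨i, hiS⟩ = ⟨r, hrS⟩ ∧ q ⟨j, hjS⟩ < ⟨r, hrS⟩ ∧ q ⟨l, hlS⟩ < ⟨r, hrS⟩)).card
        * ((S.card - 2) * ((S.card - 1) * S.card))) := by rw [hA]; ring
    _ = Nat.factorial k * (r * (r - 1) * Nat.factorial S.card) := by rw [hB]
    _ = r * (r - 1) * Nat.factorial k * Nat.factorial S.card := by ring

end Final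

/-- For a vertex `i` of degree `nᵢ ≥ 2` and distinct fixed neighbours `j, l` of `i`, and
each `r ∈ {2,…,nᵢ}`, the number of permutations `π` such that exactly `r` neighbours of `i`
precede `i`, with both `j` and `l` among them, equals `r(r-1)·k!/((nᵢ-1)nᵢ(nᵢ+1))`. -/
theorem dagar_perm_count_two {k : ℕ} (G : SimpleGraph (Fin k)) [DecidableRel G.Adj]
    (i j l : Fin k) (hj : G.Adj i j) (hl : G.Adj i l) (hjl : j ≠ l)
    (hdeg : 2 ≤ G.degree i) (r : ℕ) (hr1 : 2 ≤ r) (hr2 : r ≤ G.degree i) :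
    (Finset.univ.filter (fun π : Equiv.Perm (Fin k) =>
        ((G.neighborFinset i).filter (fun u => π.symm u < π.symm i)).card = r ∧
          π.symm j < π.symm i ∧ π.symm l < π.symm i)).card
      = r * (r - 1) * Nat.factorial k / ((G.degree i - 1) * G.degree i * (G.degree i + 1)) := by
  set n := G.degree i with hn
  set N := G.neighborFinset i with hN
  set S : Finset (Fin k) := insert i N with hS
  have hiN : i ∉ N := by rw [hN]; exact SimpleGraph.notMem_neighborFinset_self G i
  have hcard : S.card = n + 1 := by
    rw [hS, Finset.card_insert_of_notMem hiN, hN,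
      SimpleGraph.card_neighborFinset_eq_degree]
  have hiS : i ∈ S := Finset.mem_insert_self _ _
  have hjS : j ∈ S := Finset.mem_insert_of_mem ((SimpleGraph.mem_neighborFinset G i j).2 hj)
  have hlS : l ∈ S := Finset.mem_insert_of_mem ((SimpleGraph.mem_neighborFinset G i l).2 hl)
  have hij : i ≠ j := hj.ne
  have hil : i ≠ l := hl.ne
  have hrS : r < S.card := by omega
  have hrnk : ∀ σ : Equiv.Perm (Fin k),
      rnk S σ i = (N.filter (fun v => σ v < σ i)).card := by
    intro σ
    show (S.filter (fun v => σ v < σ i)).card = _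
    rw [hS, Finset.filter_insert, if_neg (lt_irrefl (σ i))]
  have hsets : (Finset.univ.filter (fun π : Equiv.Perm (Fin k) =>
        (N.filter (fun u => π.symm u < π.symm i)).card = r ∧
          π.symm j < π.symm i ∧ π.symm l < π.symm i)).card
      = (Finset.univ.filter (fun σ : Equiv.Perm (Fin k) =>
        rnk S σ i = r ∧ σ j < σ i ∧ σ l < σ i)).card := by
    refine Finset.card_nbij' (fun π => π.symm) (fun σ => σ.symm) ?_ ?_ ?_ ?_
    · intro π hπ
      rw [Finset.mem_coe, Finset.mem_filter] at hπ ⊢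
      exact ⟨Finset.mem_univ _, by rw [hrnk]; exact hπ.2.1, hπ.2.2⟩
    · intro σ hσ
      rw [Finset.mem_coe, Finset.mem_filter] at hσ ⊢
      refine ⟨Finset.mem_univ _, ?_, ?_, ?_⟩
      · simpa using (hrnk σ ▸ hσ.2.1)
      · simpa using hσ.2.2.1
      · simpa using hσ.2.2.2
    · intro π _; simp
    · intro σ _; simp
  rw [hsets]
  have hmain := main_count S i j l hiS hjS hlS hij hil hjl r hrS
  rw [hcard] at hmain
  have e1 : n + 1 - 2 = n - 1 := by omega
  have e2 : n + 1 - 1 = n := by omega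
  rw [e1, e2] at hmain
  have hpos : 0 < (n - 1) * n * (n + 1) :=
    Nat.mul_pos (Nat.mul_pos (by omega) (by omega)) (by omega)
  refine (Nat.div_eq_of_eq_mul_left hpos ?_).symm
  rw [← hmain]
  ring
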